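/- Let G be a simple graph with n ≥ 4 vertices and m edges, ordered degree sequence Δ = d_1 ≥ ... ≥ d_{n−1} ≥ d_n = δ. Then M_1(G) ≥ δ² + (2m − δ)²/(n−1) + (1/2)(Δ − d_{n−1})² + (2(n−1)/(n−3))·((2m − δ)/(n−1) − (Δ + d_{n−1})/2)². -/
import Mathlib

open Finset

lemma split_sum4 (g : ℕ → ℝ) (n : ℕ) (hn : 4 ≤ n) :
    ∑ i ∈ range n, g i
      = g 0 + (∑ i ∈ range (n - 3), g (i + 1)) + g (n - 2) + g (n - 1) := by
  obtain ⟨p, rfl⟩ : ∃ p, n = p + 4 := ⟨n - 4, by omega⟩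
  simp only [show p + 4 - 3 = p + 1 by omega, show p + 4 - 2 = p + 2 by omega,
    show p + 4 - 1 = p + 3 by omega]
  rw [show p + 4 = (p + 2) + 1 + 1 by ring, sum_range_succ, sum_range_succ,
    Finset.sum_range_succ' _ (p + 1)]
  ring

theorem stmt10 (n : ℕ) (hn : 4 ≤ n) {V : Type*} [Fintype V] [DecidableEq V]
    (G : SimpleGraph V) [DecidableRel G.Adj]
    (m : ℕ) (hm : m = G.edgeFinset.card)
    (e : Fin n ≃ V) (d : Fin n → ℕ) (hd : ∀ i, d i = G.degree (e i))
    (hsort : Antitone d) :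
    ∑ v : V, (G.degree v : ℝ) ^ 2 ≥
      (d ⟨n - 1, by omega⟩ : ℝ) ^ 2
      + (2 * (m : ℝ) - (d ⟨n - 1, by omega⟩ : ℝ)) ^ 2 / ((n : ℝ) - 1)
      + (1 / 2) * ((d ⟨0, by omega⟩ : ℝ) - (d ⟨n - 2, by omega⟩ : ℝ)) ^ 2
      + (2 * ((n : ℝ) - 1) / ((n : ℝ) - 3)) *
          ((2 * (m : ℝ) - (d ⟨n - 1, by omega⟩ : ℝ)) / ((n : ℝ) - 1)
            - ((d ⟨0, by omega⟩ : ℝ) + (d ⟨n - 2, by omega⟩ : ℝ)) / 2) ^ 2 := by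
  set f : ℕ → ℝ := fun i => if h : i < n then (d ⟨i, h⟩ : ℝ) else 0 with hfdef
  have hf : ∀ (i : ℕ) (h : i < n), f i = (d ⟨i, h⟩ : ℝ) := fun i h => dif_pos h
  -- sum of squares
  have hsumsq : ∑ v : V, (G.degree v : ℝ) ^ 2 = ∑ i ∈ range n, f i ^ 2 := by
    rw [← Equiv.sum_comp e (fun v => (G.degree v : ℝ) ^ 2),
      ← Fin.sum_univ_eq_sum_range (fun i => f i ^ 2) n]
    refine Finset.sum_congr rfl fun i _ => ?_
    rw [hf i i.isLt, ← hd]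
  -- sum of degrees = 2m
  have hsum : ∑ i ∈ range n, f i = 2 * (m : ℝ) := by
    rw [← Fin.sum_univ_eq_sum_range f n]
    have : ∑ i : Fin n, f i = ∑ i : Fin n, (G.degree (e i) : ℝ) := by
      refine Finset.sum_congr rfl fun i _ => ?_
      rw [hf i i.isLt, ← hd]
    rw [this, Equiv.sum_comp e (fun v => (G.degree v : ℝ)), hm]
    rw [← Nat.cast_sum]
    rw [G.sum_degrees_eq_twice_card_edges]
    push_cast
    ring
  set a := f 0 with ha
  set b := f (n - 2) with hb
  set δ := f (n - 1) with hδ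
  set P := ∑ i ∈ range (n - 3), f (i + 1) with hP
  set Q := ∑ i ∈ range (n - 3), f (i + 1) ^ 2 with hQ
  have hsplit1 : a + P + b + δ = 2 * (m : ℝ) := by
    rw [← hsum, split_sum4 f n hn]
  have hsplit2 : ∑ v : V, (G.degree v : ℝ) ^ 2 = a ^ 2 + Q + b ^ 2 + δ ^ 2 := by
    rw [hsumsq, split_sum4 (fun i => f i ^ 2) n hn]
  have hcard : ((range (n - 3)).card : ℝ) = (n : ℝ) - 3 := by
    rw [Finset.card_range]
    push_cast [Nat.cast_sub (by omega : 3 ≤ n)]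
    ring
  have hCS : P ^ 2 ≤ ((n : ℝ) - 3) * Q := by
    rw [← hcard]
    exact sq_sum_le_card_mul_sum_sq
  have h1 : (0:ℝ) < (n : ℝ) - 1 := by
    have : (4:ℝ) ≤ (n : ℝ) := by exact_mod_cast hn
    linarith
  have h3 : (0:ℝ) < (n : ℝ) - 3 := by
    have : (4:ℝ) ≤ (n : ℝ) := by exact_mod_cast hn
    linarith
  -- rewrite goal in terms of a b δ
  have ga : (d ⟨0, by omega⟩ : ℝ) = a := (hf 0 (by omega)).symm
  have gb : (d ⟨n - 2, by omega⟩ : ℝ) = b := (hf (n - 2) (by omega)).symm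
  have gδ : (d ⟨n - 1, by omega⟩ : ℝ) = δ := (hf (n - 1) (by omega)).symm
  rw [ga, gb, gδ, hsplit2]
  have hm2 : 2 * (m : ℝ) - δ = a + b + P := by linarith
  rw [hm2]
  have identity : δ ^ 2 + (a + b + P) ^ 2 / ((n : ℝ) - 1)
      + 1 / 2 * (a - b) ^ 2
      + 2 * ((n : ℝ) - 1) / ((n : ℝ) - 3) *
          ((a + b + P) / ((n : ℝ) - 1) - (a + b) / 2) ^ 2
      = δ ^ 2 + a ^ 2 + b ^ 2 + P ^ 2 / ((n : ℝ) - 3) := by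
    field_simp
    ring
  rw [ge_iff_le, identity]
  have : P ^ 2 / ((n : ℝ) - 3) ≤ Q := by
    rw [div_le_iff₀ h3]
    linarith [hCS]
  linarith
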